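/- If Z is exponential with rate θ, the Tsallis entropy of the MRSSU sample of size n equals S_α(Z_MRSSU) = (1/(α−1)) ( 1 − θ^{n(α−1)} Γ(α)^n ∏_{i=1}^n [ Γ(α(i−1)+1) i^α / Γ(αi+1) ] ). -/

import Mathlib

open MeasureTheory Set Finset Real

lemma beta_real (s t : ℝ) (hs : 0 < s) (ht : 0 < t) :
    ∫ x in Set.Ioo (0:ℝ) 1, x ^ (s-1) * (1-x) ^ (t-1)
      = Real.Gamma s * Real.Gamma t / Real.Gamma (s+t) := by
  have h := Complex.Gamma_mul_Gamma_eq_betaIntegral (s := (s:ℂ)) (t := (t:ℂ))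
    (by simpa using hs) (by simpa using ht)
  have key : Complex.betaIntegral s t
      = ((∫ x in Set.Ioo (0:ℝ) 1, x ^ (s-1) * (1-x) ^ (t-1) : ℝ) : ℂ) := by
    rw [Complex.betaIntegral]
    have : (∫ x in (0:ℝ)..1, (x:ℂ) ^ ((s:ℂ)-1) * ((1:ℂ)-x) ^ ((t:ℂ)-1))
        = ∫ x in (0:ℝ)..1, ((x ^ (s-1) * (1-x) ^ (t-1) : ℝ) : ℂ) := by
      apply intervalIntegral.integral_congr
      intro x hx
      rw [Set.uIcc_of_le zero_le_one] at hx
      simp only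
      rw [Complex.ofReal_mul,
        show ((s:ℂ)-1) = ((s-1:ℝ):ℂ) by push_cast; ring,
        show ((t:ℂ)-1) = ((t-1:ℝ):ℂ) by push_cast; ring,
        show ((1:ℂ)-(x:ℂ)) = ((1-x:ℝ):ℂ) by push_cast; ring,
        ← Complex.ofReal_cpow hx.1, ← Complex.ofReal_cpow (by linarith [hx.2])]
    rw [this, intervalIntegral.integral_ofReal]
    congr 1
    rw [intervalIntegral.integral_of_le zero_le_one, MeasureTheory.integral_Ioc_eq_integral_Ioo]
  rw [key, Complex.Gamma_ofReal, Complex.Gamma_ofReal, ← Complex.ofReal_add,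
    Complex.Gamma_ofReal, ← Complex.ofReal_mul, ← Complex.ofReal_mul] at h
  have h' := Complex.ofReal_inj.mp h
  have hne : Real.Gamma (s+t) ≠ 0 := (Real.Gamma_pos_of_pos (by linarith)).ne'
  field_simp [h']
  rw [h']; ring

lemma mrssu_integral (α θ : ℝ) (hα : 0 < α) (hθ : 0 < θ) (i : ℕ) (c : ℝ) (hc : 0 < c) :
    ∫ x in Set.Ioi (0:ℝ), (c * (θ * Real.exp (-θ*x)) * (1 - Real.exp (-θ*x)) ^ i) ^ α
      = θ ^ (α-1) * c ^ α *
        (Real.Gamma α * Real.Gamma (α*i+1) / Real.Gamma (α + (α*i+1))) := by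
  have himg : (fun x : ℝ => Real.exp (-θ*x)) '' Set.Ioi 0 = Set.Ioo 0 1 := by
    ext u
    constructor
    · rintro ⟨x, hx, rfl⟩
      refine ⟨Real.exp_pos _, ?_⟩
      rw [Real.exp_lt_one_iff]
      simp only [Set.mem_Ioi] at hx
      nlinarith
    · rintro ⟨h0, h1⟩
      refine ⟨-Real.log u / θ, ?_, ?_⟩
      · have := Real.log_neg h0 h1
        exact div_pos (by linarith) hθ
      · have h2 : -θ * (-Real.log u / θ) = Real.log u := by field_simp
        show Real.exp (-θ * (-Real.log u / θ)) = u
        rw [h2, Real.exp_log h0]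
  have hderiv : ∀ x ∈ Set.Ioi (0:ℝ),
      HasDerivWithinAt (fun x : ℝ => Real.exp (-θ*x)) (-θ * Real.exp (-θ*x)) (Set.Ioi 0) x := by
    intro x _
    have h1 : HasDerivAt (fun x : ℝ => -θ*x) (-θ) x := by
      simpa using (hasDerivAt_id x).const_mul (-θ)
    have := h1.exp
    exact (this.congr_deriv (by ring)).hasDerivWithinAt
  have hinj : Set.InjOn (fun x : ℝ => Real.exp (-θ*x)) (Set.Ioi 0) := by
    intro a _ b _ h
    have := Real.exp_injective h
    have : -θ * a = -θ * b := this
    exact mul_left_cancel₀ (by linarith : -θ ≠ 0) this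
  have hsub := MeasureTheory.integral_image_eq_integral_abs_deriv_smul measurableSet_Ioi
    hderiv hinj (fun u => u ^ (α-1) * (1-u) ^ (α*i))
  rw [himg] at hsub
  have hpt : ∀ x ∈ Set.Ioi (0:ℝ),
      (c * (θ * Real.exp (-θ*x)) * (1 - Real.exp (-θ*x)) ^ i) ^ α
      = (θ ^ (α-1) * c ^ α) *
        (|(-θ * Real.exp (-θ*x))| •
          ((Real.exp (-θ*x)) ^ (α-1) * (1 - Real.exp (-θ*x)) ^ (α*i))) := by
    intro x hx
    simp only [Set.mem_Ioi] at hx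
    set u := Real.exp (-θ*x) with hu
    have hu0 : 0 < u := Real.exp_pos _
    have hu1 : u < 1 := by rw [hu, Real.exp_lt_one_iff]; nlinarith
    have h1u : (0:ℝ) < 1 - u := by linarith
    rw [smul_eq_mul, abs_of_neg (by nlinarith : -θ * u < 0)]
    rw [Real.mul_rpow (by positivity) (by positivity),
        Real.mul_rpow hc.le (by positivity),
        Real.mul_rpow hθ.le hu0.le,
        ← Real.rpow_natCast (1-u) i, ← Real.rpow_mul h1u.le]
    have e1 : θ ^ α = θ ^ (α-1) * θ := by
      rw [Real.rpow_sub hθ, Real.rpow_one, div_mul_cancel₀ _ hθ.ne']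
    have e2 : u ^ α = u ^ (α-1) * u := by
      rw [Real.rpow_sub hu0, Real.rpow_one, div_mul_cancel₀ _ hu0.ne']
    rw [e1, e2, mul_comm ((i:ℝ)) α]
    ring
  rw [MeasureTheory.setIntegral_congr_fun measurableSet_Ioi hpt,
      MeasureTheory.integral_const_mul, ← hsub,
      show α * (i:ℝ) = (α*i+1) - 1 by ring,
      beta_real α (α*i+1) hα (by positivity)]
  norm_num

/-- Tsallis entropy of the MRSSU sample of size `n` from an exponential(θ) population:
`S_α(Z_MRSSU) = (1/(α−1)) (1 − θ^{n(α−1)} Γ(α)^n ∏_{i=1}^n Γ(α(i−1)+1) i^α / Γ(αi+1))`. -/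
theorem tsallis_entropy_mrssu_exponential
    (α θ : ℝ) (n : ℕ) (hα : 0 < α) (hα1 : α ≠ 1) (hθ : 0 < θ) :
    (1 / (1 - α)) *
      ((∏ i ∈ Finset.range n,
        ∫ x in Set.Ioi (0:ℝ),
          (((i : ℝ) + 1) * (θ * Real.exp (-θ * x)) *
            (1 - Real.exp (-θ * x)) ^ (i : ℕ)) ^ α) - 1)
    = (1 / (α - 1)) *
      (1 - θ ^ ((n : ℝ) * (α - 1)) * (Real.Gamma α) ^ n *
        ∏ i ∈ Finset.range n,
          (Real.Gamma (α * (i : ℝ) + 1) * ((i : ℝ) + 1) ^ α /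
            Real.Gamma (α * ((i : ℝ) + 1) + 1))) := by
  have h1 : ∀ i ∈ Finset.range n,
      (∫ x in Set.Ioi (0:ℝ),
          (((i : ℝ) + 1) * (θ * Real.exp (-θ * x)) *
            (1 - Real.exp (-θ * x)) ^ (i : ℕ)) ^ α)
      = (θ ^ (α-1) * Real.Gamma α) *
        (Real.Gamma (α * (i : ℝ) + 1) * ((i : ℝ) + 1) ^ α /
          Real.Gamma (α * ((i : ℝ) + 1) + 1)) := by
    intro i _
    rw [mrssu_integral α θ hα hθ i ((i:ℝ)+1) (by positivity),
      show α + (α*(i:ℝ)+1) = α*((i:ℝ)+1)+1 by ring]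
    ring
  rw [Finset.prod_congr rfl h1, Finset.prod_mul_distrib, Finset.prod_const, Finset.card_range, mul_pow,
    ← Real.rpow_natCast (θ^(α-1)) n, ← Real.rpow_mul hθ.le, mul_comm (α-1) (n:ℝ)]
  have h2 : (1:ℝ) - α ≠ 0 := by intro h; apply hα1; linarith
  have h3 : α - 1 ≠ 0 := by intro h; apply hα1; linarith
  field_simp
  ring
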